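/- If ρ_{AB} is a separable bipartite quantum state, then the conditional von Neumann entropy S(A|B)_ρ = S(AB)_ρ − S(B)_ρ is nonnegative. -/

import Mathlib

open Matrix Finset
open scoped ComplexOrder
open Filter MeasureTheory
open scoped Kronecker Topology

/-- The von Neumann entropy `S(ρ) = -∑ λ_i log λ_i` of a Hermitian matrix, via its
eigenvalues (junk value `0` for non-Hermitian matrices). -/
noncomputable def vNE {n : Type*} [Fintype n] [DecidableEq n] (ρ : Matrix n n ℂ) : ℝ :=
  if h : ρ.IsHermitian then -∑ i, h.eigenvalues i * Real.log (h.eigenvalues i) else 0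

/-- A density matrix: positive semidefinite with unit trace. -/
def IsDensity {n : Type*} [Fintype n] [DecidableEq n] (ρ : Matrix n n ℂ) : Prop :=
  ρ.PosSemidef ∧ ρ.trace = 1

/-- Separability of a bipartite state: a convex combination of products of density matrices. -/
def Separable {A B : Type*} [Fintype A] [DecidableEq A] [Fintype B] [DecidableEq B]
    (ρ : Matrix (A × B) (A × B) ℂ) : Prop :=
  ∃ (s : ℕ) (p : Fin s → ℝ) (α : Fin s → Matrix A A ℂ) (β : Fin s → Matrix B B ℂ),
    (∀ k, 0 ≤ p k) ∧ (∑ k, p k = 1) ∧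
    (∀ k, IsDensity (α k)) ∧ (∀ k, IsDensity (β k)) ∧
    ∀ x y : A × B, ρ x y = ∑ k, (p k : ℂ) * (α k x.1 y.1 * β k x.2 y.2)

/-- The `B`-marginal of a bipartite state. -/
noncomputable def margSnd {A B : Type*} [Fintype A]
    (ρ : Matrix (A × B) (A × B) ℂ) : Matrix B B ℂ :=
  fun b b' => ∑ a, ρ (a, b) (a, b')

set_option linter.unusedSectionVars false

section Helpers
variable {n : Type*} [Fintype n] [DecidableEq n]

noncomputable def rdiag (d : n → ℝ) : Matrix n n ℂ := diagonal (fun i => (d i : ℂ))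

lemma quad_conj (W D : Matrix n n ℂ) (v : n → ℂ) :
    star v ⬝ᵥ ((W * D * Wᴴ) *ᵥ v) = star (Wᴴ *ᵥ v) ⬝ᵥ (D *ᵥ (Wᴴ *ᵥ v)) := by
  rw [star_mulVec, conjTranspose_conjTranspose]
  rw [← dotProduct_mulVec, mulVec_mulVec, mulVec_mulVec, Matrix.mul_assoc]

lemma quad_rdiag (d : n → ℝ) (w : n → ℂ) :
    star w ⬝ᵥ (rdiag d *ᵥ w) = ((∑ i, d i * ‖w i‖ ^ 2 : ℝ) : ℂ) := by
  simp only [dotProduct, rdiag, mulVec_diagonal, Pi.star_apply, Complex.ofReal_sum]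
  congr 1; ext i
  rw [show star (w i) * ((d i : ℂ) * w i) = (d i : ℂ) * (star (w i) * w i) by ring]
  rw [Complex.star_def, Complex.conj_mul']
  push_cast
  ring

lemma rdiag_herm (d : n → ℝ) : (rdiag d).IsHermitian := by
  unfold rdiag Matrix.IsHermitian
  rw [diagonal_conjTranspose]
  simp [Pi.star_def, Complex.conj_ofReal]

lemma conj_rdiag_herm (W : Matrix n n ℂ) (d : n → ℝ) :
    (W * rdiag d * Wᴴ).IsHermitian := by
  have h := rdiag_herm (n := n) d
  unfold Matrix.IsHermitian at h ⊢
  rw [conjTranspose_mul, conjTranspose_mul, conjTranspose_conjTranspose, h, Matrix.mul_assoc]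

lemma conj_rdiag_psd (W : Matrix n n ℂ) (d : n → ℝ) (hd : ∀ i, 0 ≤ d i) :
    (W * rdiag d * Wᴴ).PosSemidef := by
  refine PosSemidef.of_dotProduct_mulVec_nonneg (conj_rdiag_herm W d) fun v => ?_
  rw [quad_conj, quad_rdiag]
  rw [Complex.zero_le_real]
  exact Finset.sum_nonneg fun i _ => mul_nonneg (hd i) (by positivity)

lemma rdiag_mul_rdiag (d e : n → ℝ) : rdiag (n := n) d * rdiag e = rdiag (fun i => d i * e i) := by
  unfold rdiag
  rw [diagonal_mul_diagonal]
  push_cast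
  rfl

lemma conj_rdiag_mul (W : Matrix n n ℂ) (hW : Wᴴ * W = 1) (d e : n → ℝ) :
    (W * rdiag d * Wᴴ) * (W * rdiag e * Wᴴ) = W * rdiag (fun i => d i * e i) * Wᴴ := by
  rw [← rdiag_mul_rdiag]
  calc (W * rdiag d * Wᴴ) * (W * rdiag e * Wᴴ)
      = W * (rdiag d * ((Wᴴ * W) * (rdiag e * Wᴴ))) := by simp only [Matrix.mul_assoc]
    _ = W * (rdiag d * rdiag e) * Wᴴ := by rw [hW, Matrix.one_mul]; simp only [Matrix.mul_assoc]

lemma conj_rdiag_add (W : Matrix n n ℂ) (d e : n → ℝ) :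
    W * rdiag d * Wᴴ + W * rdiag e * Wᴴ = W * rdiag (fun i => d i + e i) * Wᴴ := by
  have : rdiag (n := n) d + rdiag e = rdiag (fun i => d i + e i) := by
    unfold rdiag
    rw [diagonal_add]
    push_cast
    rfl
  rw [← this, Matrix.mul_add, Matrix.add_mul]

lemma rdiag_one : rdiag (n := n) (fun _ => 1) = 1 := by
  unfold rdiag
  simp

lemma rdiag_const (t : ℝ) : rdiag (n := n) (fun _ => t) = (t:ℂ) • 1 := by
  unfold rdiag
  rw [smul_eq_diagonal_mul, Matrix.mul_one]

lemma conj_rdiag_one (W : Matrix n n ℂ) (hW' : W * Wᴴ = 1) :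
    W * rdiag (fun _ => 1) * Wᴴ = 1 := by
  rw [rdiag_one, Matrix.mul_one, hW']

lemma conj_rdiag_add_const (W : Matrix n n ℂ) (hW' : W * Wᴴ = 1) (d : n → ℝ) (t : ℝ) :
    W * rdiag (fun i => d i + t) * Wᴴ = W * rdiag d * Wᴴ + (t:ℂ) • 1 := by
  rw [← conj_rdiag_add, rdiag_const, Matrix.mul_smul, Matrix.mul_one, Matrix.smul_mul, hW']

lemma inv_quad_antitone (X Y Xi Yi : Matrix n n ℂ)
    (hX : X.PosSemidef) (hXY : (Y - X).PosSemidef)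
    (hXi : Xi.IsHermitian)
    (hX1 : X * Xi = 1) (hY1 : Y * Yi = 1) (v : n → ℂ) :
    star v ⬝ᵥ (Yi *ᵥ v) ≤ star v ⬝ᵥ (Xi *ᵥ v) := by
  set u := Xi *ᵥ v with hu
  set w := Yi *ᵥ v with hw
  have hXu : X *ᵥ u = v := by rw [hu, mulVec_mulVec, hX1, one_mulVec]
  have hYw : Y *ᵥ w = v := by rw [hw, mulVec_mulVec, hY1, one_mulVec]
  have h0 : (0:ℂ) ≤ star (w - u) ⬝ᵥ (X *ᵥ (w - u)) := hX.dotProduct_mulVec_nonneg _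
  have hterm : star u ⬝ᵥ (X *ᵥ w) = star v ⬝ᵥ w := by
    rw [dotProduct_mulVec]
    have e1 := star_mulVec (M := Xᴴ) (v := u)
    rw [hX.1, hX.1, hXu] at e1
    rw [← e1]
  have huv : star u ⬝ᵥ v = star v ⬝ᵥ u := by
    rw [hu, star_mulVec, hXi, dotProduct_mulVec]
  have h0' : (0:ℂ) ≤ (star w ⬝ᵥ (X *ᵥ w)) - star w ⬝ᵥ v - star v ⬝ᵥ w + star v ⬝ᵥ u := by
    have e : star (w - u) ⬝ᵥ (X *ᵥ (w - u))
        = (star w ⬝ᵥ (X *ᵥ w)) - star w ⬝ᵥ v - star v ⬝ᵥ w + star v ⬝ᵥ u := by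
      rw [mulVec_sub, hXu, star_sub, sub_dotProduct, dotProduct_sub, dotProduct_sub,
        hterm, huv]
      ring
    rwa [e] at h0
  have hXw : star w ⬝ᵥ (X *ᵥ w) ≤ star w ⬝ᵥ v := by
    have h1 : (0:ℂ) ≤ star w ⬝ᵥ ((Y - X) *ᵥ w) := hXY.dotProduct_mulVec_nonneg _
    rw [sub_mulVec, dotProduct_sub, hYw] at h1
    exact sub_nonneg.mp h1
  have h2 : (0:ℂ) ≤ star v ⬝ᵥ u - star v ⬝ᵥ w := by
    have h3 := add_nonneg h0' (sub_nonneg.mpr hXw)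
    calc (0:ℂ) ≤ _ := h3
    _ = star v ⬝ᵥ u - star v ⬝ᵥ w := by ring
  exact sub_nonneg.mp h2

end Helpers

section Integral

lemma key_ilog {a b : ℝ} (ha : 0 < a) (hab : a ≤ b) :
    MeasureTheory.IntegrableOn (fun t => (a+t)⁻¹ - (b+t)⁻¹) (Set.Ioi 0) ∧
    ∫ t in Set.Ioi (0:ℝ), ((a+t)⁻¹ - (b+t)⁻¹) = Real.log b - Real.log a := by
  have hb : 0 < b := lt_of_lt_of_le ha hab
  set g : ℝ → ℝ := fun t => Real.log (a+t) - Real.log (b+t) with hg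
  have hderiv : ∀ t ∈ Set.Ici (0:ℝ), HasDerivAt g ((a+t)⁻¹ - (b+t)⁻¹) t := by
    intro t ht
    have hat : 0 < a + t := by linarith [Set.mem_Ici.mp ht]
    have hbt : 0 < b + t := by linarith [Set.mem_Ici.mp ht]
    have h1 : HasDerivAt (fun s => Real.log (a+s)) ((a+t)⁻¹) t := by
      have := ((hasDerivAt_id t).const_add a).log hat.ne'
      simpa [one_div] using this
    have h2 : HasDerivAt (fun s => Real.log (b+s)) ((b+t)⁻¹) t := by
      have := ((hasDerivAt_id t).const_add b).log hbt.ne'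
      simpa [one_div] using this
    exact h1.sub h2
  have hpos : ∀ t ∈ Set.Ioi (0:ℝ), 0 ≤ (a+t)⁻¹ - (b+t)⁻¹ := by
    intro t ht
    have hat : 0 < a + t := by linarith [Set.mem_Ioi.mp ht]
    have hbt : 0 < b + t := by linarith [Set.mem_Ioi.mp ht]
    have : (b+t)⁻¹ ≤ (a+t)⁻¹ := by
      apply inv_anti₀ hat (by linarith)
    linarith
  have htend : Tendsto g atTop (𝓝 0) := by
    have h0 : Tendsto (fun t : ℝ => (b-a)*(a+t)⁻¹ + 1) atTop (𝓝 1) := by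
      have h1 : Tendsto (fun t : ℝ => a + t) atTop atTop :=
        tendsto_atTop_add_const_left _ a tendsto_id
      have h2 : Tendsto (fun t : ℝ => (a+t)⁻¹) atTop (𝓝 0) := h1.inv_tendsto_atTop
      have h3 := h2.const_mul (b-a)
      simpa using h3.add_const 1
    have h4 : Tendsto (fun t : ℝ => Real.log ((b-a)*(a+t)⁻¹ + 1)) atTop (𝓝 0) := by
      have := (Real.continuousAt_log one_ne_zero).tendsto.comp h0
      simpa [Function.comp_def] using this
    have h5 : Tendsto (fun t => - Real.log ((b-a)*(a+t)⁻¹ + 1)) atTop (𝓝 0) := by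
      simpa using h4.neg
    apply h5.congr'
    filter_upwards [eventually_ge_atTop (0:ℝ)] with t ht
    have hat : 0 < a + t := by linarith
    have hbt : 0 < b + t := by linarith
    have : (b-a)*(a+t)⁻¹ + 1 = (b+t)/(a+t) := by field_simp; ring
    rw [this, Real.log_div hbt.ne' hat.ne', hg]
    ring
  refine ⟨integrableOn_Ioi_deriv_of_nonneg' hderiv hpos htend, ?_⟩
  have := integral_Ioi_of_hasDerivAt_of_nonneg' hderiv hpos htend
  rw [this, hg]
  simp

lemma ilog {x : ℝ} (hx : 0 < x) :
    MeasureTheory.IntegrableOn (fun t => (1+t)⁻¹ - (x+t)⁻¹) (Set.Ioi 0) ∧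
    ∫ t in Set.Ioi (0:ℝ), ((1+t)⁻¹ - (x+t)⁻¹) = Real.log x := by
  rcases le_total 1 x with h|h
  · have := key_ilog one_pos h
    simpa using this
  · obtain ⟨hint, hval⟩ := key_ilog hx h
    have hneg : (fun t : ℝ => (1+t)⁻¹ - (x+t)⁻¹) = fun t => -((x+t)⁻¹ - (1+t)⁻¹) := by
      funext t; ring
    constructor
    · rw [hneg]; exact hint.neg
    · rw [hneg, MeasureTheory.integral_neg, hval]
      simp

lemma wlog_sum {n : Type*} [Fintype n] (c d : n → ℝ) (hd : ∀ i, 0 < d i) :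
    MeasureTheory.IntegrableOn (fun t => ∑ i, c i * ((1+t)⁻¹ - (d i+t)⁻¹)) (Set.Ioi 0) ∧
    ∫ t in Set.Ioi (0:ℝ), (∑ i, c i * ((1+t)⁻¹ - (d i+t)⁻¹)) = ∑ i, c i * Real.log (d i) := by
  have hint : ∀ i : n, MeasureTheory.IntegrableOn
      (fun t => c i * ((1+t)⁻¹ - (d i+t)⁻¹)) (Set.Ioi 0) :=
    fun i => ((ilog (hd i)).1.const_mul _)
  constructor
  · exact MeasureTheory.integrable_finset_sum _ (fun i _ => hint i)
  · rw [MeasureTheory.integral_finset_sum _ (fun i _ => hint i)]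
    congr 1
    funext i
    rw [MeasureTheory.integral_const_mul, (ilog (hd i)).2]

end Integral

section Core
variable {n : Type*} [Fintype n] [DecidableEq n]

lemma core_log_mono (W Z : Matrix n n ℂ) (hW : Wᴴ * W = 1) (hZ : Zᴴ * Z = 1)
    (d e : n → ℝ) (hd : ∀ i, 0 < d i) (he : ∀ j, 0 < e j)
    (hXY : (Z * rdiag e * Zᴴ - W * rdiag d * Wᴴ).PosSemidef) :
    (Z * rdiag (fun j => Real.log (e j)) * Zᴴ
      - W * rdiag (fun i => Real.log (d i)) * Wᴴ).PosSemidef := by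
  have hW' : W * Wᴴ = 1 := mul_eq_one_comm.mp hW
  have hZ' : Z * Zᴴ = 1 := mul_eq_one_comm.mp hZ
  refine PosSemidef.of_dotProduct_mulVec_nonneg ((conj_rdiag_herm Z _).sub (conj_rdiag_herm W _)) fun v => ?_
  rw [sub_mulVec, dotProduct_sub, quad_conj, quad_conj, quad_rdiag, quad_rdiag]
  set w := Wᴴ *ᵥ v with hwdef
  set z := Zᴴ *ᵥ v with hzdef
  set c : n → ℝ := fun i => ‖w i‖^2 with hc
  set f : n → ℝ := fun j => ‖z j‖^2 with hf
  rw [← Complex.ofReal_sub, Complex.zero_le_real, sub_nonneg]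
  -- equal total weights
  have hsum : ∑ i, c i = ∑ j, f j := by
    have e1 : star v ⬝ᵥ ((W * rdiag (fun _ => (1:ℝ)) * Wᴴ) *ᵥ v)
        = ((∑ i, (1:ℝ) * c i : ℝ) : ℂ) := by rw [quad_conj, quad_rdiag]
    have e2 : star v ⬝ᵥ ((Z * rdiag (fun _ => (1:ℝ)) * Zᴴ) *ᵥ v)
        = ((∑ j, (1:ℝ) * f j : ℝ) : ℂ) := by rw [quad_conj, quad_rdiag]
    rw [conj_rdiag_one W hW'] at e1
    rw [conj_rdiag_one Z hZ'] at e2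
    have e3 : ((∑ i, (1:ℝ) * c i : ℝ) : ℂ) = ((∑ j, (1:ℝ) * f j : ℝ) : ℂ) := by
      rw [← e1, ← e2]
    have e4 := Complex.ofReal_inj.mp e3
    simpa using e4
  -- pointwise resolvent comparison
  have hquad : ∀ t : ℝ, 0 < t → ∑ j, f j * (e j + t)⁻¹ ≤ ∑ i, c i * (d i + t)⁻¹ := by
    intro t ht
    have hXpsd : (W * rdiag (fun i => d i + t) * Wᴴ).PosSemidef :=
      conj_rdiag_psd W _ (fun i => by have := hd i; linarith)
    have hYX : ((Z * rdiag (fun j => e j + t) * Zᴴ) - (W * rdiag (fun i => d i + t) * Wᴴ)).PosSemidef := by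
      rw [conj_rdiag_add_const Z hZ', conj_rdiag_add_const W hW']
      simpa using hXY
    have hX1 : (W * rdiag (fun i => d i + t) * Wᴴ) * (W * rdiag (fun i => (d i + t)⁻¹) * Wᴴ) = 1 := by
      rw [conj_rdiag_mul W hW]
      have : (fun i => (d i + t) * (d i + t)⁻¹) = fun _ : n => (1:ℝ) := by
        funext i
        exact mul_inv_cancel₀ (by have := hd i; linarith)
      rw [this, conj_rdiag_one W hW']
    have hY1 : (Z * rdiag (fun j => e j + t) * Zᴴ) * (Z * rdiag (fun j => (e j + t)⁻¹) * Zᴴ) = 1 := by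
      rw [conj_rdiag_mul Z hZ]
      have : (fun j => (e j + t) * (e j + t)⁻¹) = fun _ : n => (1:ℝ) := by
        funext j
        exact mul_inv_cancel₀ (by have := he j; linarith)
      rw [this, conj_rdiag_one Z hZ']
    have h := inv_quad_antitone _ _ _ _ hXpsd hYX (conj_rdiag_herm W _) hX1 hY1 v
    rw [quad_conj, quad_conj, quad_rdiag, quad_rdiag, ← hwdef, ← hzdef] at h
    have h' : (∑ j, (e j + t)⁻¹ * f j : ℝ) ≤ ∑ i, (d i + t)⁻¹ * c i := by exact_mod_cast h
    calc ∑ j, f j * (e j + t)⁻¹ = ∑ j, (e j + t)⁻¹ * f j := by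
          congr 1; funext j; ring
    _ ≤ ∑ i, (d i + t)⁻¹ * c i := h'
    _ = ∑ i, c i * (d i + t)⁻¹ := by congr 1; funext i; ring
  -- integrate
  have hFle : ∀ t ∈ Set.Ioi (0:ℝ),
      (∑ i, c i * ((1+t)⁻¹ - (d i + t)⁻¹)) ≤ (∑ j, f j * ((1+t)⁻¹ - (e j + t)⁻¹)) := by
    intro t ht
    have ht' : (0:ℝ) < t := ht
    have h1 := hquad t ht'
    have e5 : ∑ i, c i * ((1+t)⁻¹ - (d i + t)⁻¹)
        = (∑ i, c i) * (1+t)⁻¹ - ∑ i, c i * (d i + t)⁻¹ := by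
      rw [Finset.sum_mul]
      rw [← Finset.sum_sub_distrib]
      congr 1; funext i; ring
    have e6 : ∑ j, f j * ((1+t)⁻¹ - (e j + t)⁻¹)
        = (∑ j, f j) * (1+t)⁻¹ - ∑ j, f j * (e j + t)⁻¹ := by
      rw [Finset.sum_mul]
      rw [← Finset.sum_sub_distrib]
      congr 1; funext j; ring
    rw [e5, e6, hsum]
    linarith
  obtain ⟨hFint, hFval⟩ := wlog_sum c d hd
  obtain ⟨hGint, hGval⟩ := wlog_sum f e he
  have hmono := MeasureTheory.setIntegral_mono_on hFint hGint measurableSet_Ioi hFle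
  rw [hFval, hGval] at hmono
  calc ∑ i, Real.log (d i) * c i = ∑ i, c i * Real.log (d i) := by
        congr 1; funext i; ring
  _ ≤ ∑ j, f j * Real.log (e j) := hmono
  _ = ∑ j, Real.log (e j) * f j := by congr 1; funext j; ring

lemma trace_conj_rdiag_gen (W : Matrix n n ℂ) (hW : Wᴴ * W = 1) (d : n → ℝ) :
    (W * rdiag d * Wᴴ).trace = ((∑ i, d i : ℝ) : ℂ) := by
  rw [Matrix.trace_mul_cycle, hW, Matrix.one_mul]
  unfold rdiag
  rw [Matrix.trace_diagonal]
  push_cast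
  rfl

lemma kron_conjTranspose {m : Type*} [Fintype m] [DecidableEq m]
    (X : Matrix m m ℂ) (Y : Matrix n n ℂ) : (X ⊗ₖ Y)ᴴ = Xᴴ ⊗ₖ Yᴴ := by
  ext ⟨i,j⟩ ⟨k,l⟩
  simp [conjTranspose_apply, kroneckerMap_apply, mul_comm]

lemma kron_psd {m : Type*} [Fintype m] [DecidableEq m]
    {X : Matrix m m ℂ} {Y : Matrix n n ℂ} (hX : X.PosSemidef) (hY : Y.PosSemidef) :
    (X ⊗ₖ Y).PosSemidef := by
  exact hX.kronecker hY

lemma psd_smul_real {M : Matrix n n ℂ} (hM : M.PosSemidef) {c : ℝ} (hc : 0 ≤ c) :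
    ((c:ℂ) • M).PosSemidef := by
  refine PosSemidef.of_dotProduct_mulVec_nonneg ?_ ?_
  · unfold Matrix.IsHermitian
    rw [conjTranspose_smul, hM.1]
    congr 1
    exact Complex.conj_ofReal c
  · intro v
    rw [smul_mulVec, dotProduct_smul, smul_eq_mul]
    exact mul_nonneg (Complex.zero_le_real.mpr hc) (hM.dotProduct_mulVec_nonneg v)

lemma psd_sum {ι : Type*} (s : Finset ι) (f : ι → Matrix n n ℂ)
    (h : ∀ i ∈ s, (f i).PosSemidef) : (∑ i ∈ s, f i).PosSemidef := by
  classical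
  induction s using Finset.induction_on with
  | empty => simpa using Matrix.PosSemidef.zero
  | insert _ _ hnotin ih =>
    rw [Finset.sum_insert hnotin]
    exact (h _ (Finset.mem_insert_self _ _)).add (ih fun i hi => h i (Finset.mem_insert_of_mem hi))

lemma trace_pair_nonneg (W : Matrix n n ℂ) (d : n → ℝ) (hd : ∀ i, 0 ≤ d i)
    (M : Matrix n n ℂ) (hM : M.PosSemidef) :
    0 ≤ ((W * rdiag d * Wᴴ) * M).trace := by
  have key : ((W * rdiag d * Wᴴ) * M).trace = ∑ i, (d i : ℂ) * ((Wᴴ * M * W) i i) := by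
    rw [show (W * rdiag d * Wᴴ) * M = W * (rdiag d * (Wᴴ * M)) by simp only [Matrix.mul_assoc],
      Matrix.trace_mul_comm]
    rw [show rdiag d * (Wᴴ * M) * W = rdiag (n := n) d * (Wᴴ * M * W) by
      simp only [Matrix.mul_assoc]]
    unfold Matrix.trace
    rw [Finset.sum_congr rfl (fun i _ => ?_)]
    rw [Matrix.diag_apply, rdiag, Matrix.diagonal_mul]
  rw [key]
  have hentry : ∀ i : n, 0 ≤ (Wᴴ * M * W) i i := by
    intro i
    have h := hM.dotProduct_mulVec_nonneg (fun k => W k i)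
    have e : (Wᴴ * M * W) i i = star (fun k => W k i) ⬝ᵥ (M *ᵥ (fun k => W k i)) := by
      simp only [Matrix.mul_apply, conjTranspose_apply, dotProduct, mulVec, dotProduct,
        Pi.star_apply, Finset.sum_mul, Finset.mul_sum]
      rw [Finset.sum_comm]
      apply Finset.sum_congr rfl
      intro j _
      apply Finset.sum_congr rfl
      intro k _
      ring
    rw [e]
    exact h
  exact Finset.sum_nonneg fun i _ =>
    mul_nonneg (Complex.zero_le_real.mpr (hd i)) (hentry i)


lemma conj_rdiag_mul_trace (W : Matrix n n ℂ) (hW : Wᴴ * W = 1) (d e : n → ℝ) :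
    ((W * rdiag d * Wᴴ) * (W * rdiag e * Wᴴ)).trace = ((∑ i, d i * e i : ℝ) : ℂ) := by
  rw [conj_rdiag_mul W hW, trace_conj_rdiag_gen W hW]

lemma spectral' {X : Matrix n n ℂ} (hX : X.IsHermitian) :
    X = (hX.eigenvectorUnitary : Matrix n n ℂ) * rdiag hX.eigenvalues
      * (hX.eigenvectorUnitary : Matrix n n ℂ)ᴴ := by
  conv_lhs => rw [hX.spectral_theorem]
  rw [← Matrix.star_eq_conjTranspose]
  rfl

lemma eigU_unitary {X : Matrix n n ℂ} (hX : X.IsHermitian) :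
    (hX.eigenvectorUnitary : Matrix n n ℂ)ᴴ * (hX.eigenvectorUnitary : Matrix n n ℂ) = 1 := by
  rw [← Matrix.star_eq_conjTranspose]
  exact Matrix.UnitaryGroup.star_mul_self _

lemma sum_eigenvalues_eq_trace' {X : Matrix n n ℂ} (hX : X.IsHermitian) :
    ((∑ i, hX.eigenvalues i : ℝ) : ℂ) = X.trace := by
  conv_rhs => rw [spectral' hX]
  rw [trace_conj_rdiag_gen _ (eigU_unitary hX)]

lemma one_sub_density_psd {α : Matrix n n ℂ} (h1 : α.PosSemidef) (h2 : α.trace = 1) :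
    ((1 : Matrix n n ℂ) - α).PosSemidef := by
  have hH := h1.1
  set U := (hH.eigenvectorUnitary : Matrix n n ℂ) with hUdef
  have hU : Uᴴ * U = 1 := eigU_unitary hH
  have hU' : U * Uᴴ = 1 := mul_eq_one_comm.mp hU
  have hsumev : ∑ i, hH.eigenvalues i = 1 := by
    have h3 := sum_eigenvalues_eq_trace' hH
    rw [h2] at h3
    exact_mod_cast h3
  have hle : ∀ i, hH.eigenvalues i ≤ 1 := by
    intro i
    rw [← hsumev]
    exact Finset.single_le_sum (fun j _ => h1.eigenvalues_nonneg j) (Finset.mem_univ i)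
  have hrepr : (1 : Matrix n n ℂ) - α = U * rdiag (fun i => 1 - hH.eigenvalues i) * Uᴴ := by
    have hadd := conj_rdiag_add U (fun i => 1 - hH.eigenvalues i) hH.eigenvalues
    have hfun : (fun i => (1 - hH.eigenvalues i) + hH.eigenvalues i) = fun _ : n => (1:ℝ) := by
      funext i; ring
    rw [hfun, conj_rdiag_one U hU'] at hadd
    have := spectral' hH
    rw [← hUdef] at this
    rw [← this] at hadd
    exact (eq_sub_of_add_eq hadd).symm
  rw [hrepr]
  exact conj_rdiag_psd _ _ (fun i => by linarith [hle i])

end Core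

section Bip
variable {A B : Type*} [Fintype A] [DecidableEq A] [Fintype B] [DecidableEq B]

lemma margSnd_add (M N : Matrix (A × B) (A × B) ℂ) :
    margSnd (M + N) = margSnd M + margSnd N := by
  funext b b'
  simp [margSnd, Finset.sum_add_distrib]

lemma margSnd_smul_one (ε : ℂ) :
    margSnd ((ε • 1 : Matrix (A × B) (A × B) ℂ))
      = ((Fintype.card A : ℂ) * ε) • (1 : Matrix B B ℂ) := by
  funext b b'
  show ∑ a : A, (ε • (1 : Matrix (A × B) (A × B) ℂ)) (a, b) (a, b')
      = ((Fintype.card A : ℂ) * ε) • (1 : Matrix B B ℂ) b b'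
  by_cases hbb : b = b'
  · subst hbb
    simp [Matrix.one_apply, Finset.sum_const, mul_comm]
  · have h1 : ∀ a : A, ((a, b) : A × B) ≠ (a, b') := by
      intro a hc
      exact hbb (congrArg Prod.snd hc)
    simp only [Matrix.smul_apply, Matrix.one_apply_ne (h1 _), Matrix.one_apply_ne hbb,
      smul_zero, Finset.sum_const_zero]

lemma trace_mul_one_kron (M : Matrix (A × B) (A × B) ℂ) (L : Matrix B B ℂ) :
    (M * ((1 : Matrix A A ℂ) ⊗ₖ L)).trace = ((margSnd M) * L).trace := by
  unfold Matrix.trace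
  simp only [Matrix.diag_apply, Matrix.mul_apply, kroneckerMap_apply, Matrix.one_apply, margSnd]
  simp only [Fintype.sum_prod_type]
  simp only [mul_ite, mul_one, one_mul, mul_zero, ite_mul, zero_mul, Finset.sum_ite_irrel,
    Finset.sum_const_zero, Finset.sum_ite_eq, Finset.sum_ite_eq', Finset.mem_univ, if_true]
  rw [Finset.sum_comm]
  apply Finset.sum_congr rfl
  intro b _
  rw [Finset.sum_comm]
  apply Finset.sum_congr rfl
  intro b' _
  rw [Finset.sum_mul]

lemma kron_conjTranspose' {m n : Type*} [Fintype m] [Fintype n]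
    (X : Matrix m m ℂ) (Y : Matrix n n ℂ) : (X ⊗ₖ Y)ᴴ = Xᴴ ⊗ₖ Yᴴ := by
  ext ⟨i,j⟩ ⟨k,l⟩
  simp [conjTranspose_apply, kroneckerMap_apply, mul_comm]

lemma one_kron_rdiag (μ : B → ℝ) :
    (1 : Matrix A A ℂ) ⊗ₖ rdiag μ = rdiag (fun x : A × B => μ x.2) := by
  rw [show (1 : Matrix A A ℂ) = diagonal (fun _ => (1:ℂ)) by simp, rdiag,
    Matrix.diagonal_kronecker_diagonal]
  unfold rdiag
  congr 1
  funext x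
  simp

lemma kron_one_repr (V : Matrix B B ℂ) (μ : B → ℝ) :
    (1 : Matrix A A ℂ) ⊗ₖ (V * rdiag μ * Vᴴ)
      = ((1 : Matrix A A ℂ) ⊗ₖ V) * rdiag (fun x : A × B => μ x.2)
        * (((1 : Matrix A A ℂ) ⊗ₖ V))ᴴ := by
  rw [kron_conjTranspose', conjTranspose_one, ← one_kron_rdiag (A := A) μ,
    ← Matrix.mul_kronecker_mul, ← Matrix.mul_kronecker_mul, Matrix.one_mul, Matrix.one_mul]

lemma kron_one_unitary (V : Matrix B B ℂ) (hV : Vᴴ * V = 1) :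
    (((1 : Matrix A A ℂ) ⊗ₖ V))ᴴ * ((1 : Matrix A A ℂ) ⊗ₖ V) = 1 := by
  rw [kron_conjTranspose', conjTranspose_one, ← Matrix.mul_kronecker_mul, Matrix.one_mul, hV,
    Matrix.one_kronecker_one]

end Bip

section Main
variable {A B : Type*} [Fintype A] [DecidableEq A] [Fintype B] [DecidableEq B]

lemma exists_repr {n : Type*} [Fintype n] [DecidableEq n] {X : Matrix n n ℂ}
    (hX : X.PosSemidef) :
    ∃ (W : Matrix n n ℂ) (d : n → ℝ), Wᴴ * W = 1 ∧ X = W * rdiag d * Wᴴ ∧ (∀ i, 0 ≤ d i) ∧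
      vNE X = -∑ i, d i * Real.log (d i) := by
  refine ⟨_, _, eigU_unitary hX.1, spectral' hX.1, fun i => hX.eigenvalues_nonneg i, ?_⟩
  unfold vNE
  rw [dif_pos hX.1]

lemma sep_structure (ρ : Matrix (A × B) (A × B) ℂ) (hρ : IsDensity ρ) (hsep : Separable ρ) :
    (margSnd ρ).PosSemidef ∧ ((1 : Matrix A A ℂ) ⊗ₖ margSnd ρ - ρ).PosSemidef := by
  obtain ⟨s, p, α, β, hp, _hps, hα, hβ, hrep⟩ := hsep
  have hrep' : ∀ (a a' : A) (b b' : B),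
      ρ (a,b) (a',b') = ∑ k, (p k : ℂ) * (α k a a' * β k b b') := by
    intro a a' b b'
    simpa using hrep (a,b) (a',b')
  have hmarg : margSnd ρ = ∑ k, (p k : ℂ) • β k := by
    funext b b'
    show ∑ a : A, ρ (a,b) (a,b') = _
    rw [show (∑ k, (p k : ℂ) • β k) b b' = ∑ k, (p k : ℂ) * β k b b' by
      simp [Matrix.sum_apply]]
    rw [Finset.sum_congr rfl fun a _ => hrep' a a b b', Finset.sum_comm]
    apply Finset.sum_congr rfl
    intro k _
    rw [← Finset.mul_sum, ← Finset.sum_mul]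
    have htr : (∑ a : A, α k a a) = (α k).trace := rfl
    rw [htr, (hα k).2, one_mul]
  have hmargPSD : (margSnd ρ).PosSemidef := by
    rw [hmarg]
    exact psd_sum _ _ fun k _ => psd_smul_real (hβ k).1 (hp k)
  refine ⟨hmargPSD, ?_⟩
  have hdiff : (1 : Matrix A A ℂ) ⊗ₖ margSnd ρ - ρ
      = ∑ k, (p k : ℂ) • (((1 : Matrix A A ℂ) - α k) ⊗ₖ β k) := by
    funext x y
    obtain ⟨a, b⟩ := x
    obtain ⟨a', b'⟩ := y
    show (1 : Matrix A A ℂ) a a' * margSnd ρ b b' - ρ (a,b) (a',b') = _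
    rw [show (∑ k, (p k : ℂ) • (((1 : Matrix A A ℂ) - α k) ⊗ₖ β k)) (a,b) (a',b')
        = ∑ k, (p k : ℂ) * (((1 : Matrix A A ℂ) a a' - α k a a') * β k b b') by
      simp [Matrix.sum_apply, Matrix.sub_apply, Matrix.kroneckerMap_apply]]
    rw [show margSnd ρ b b' = ∑ k, (p k : ℂ) * β k b b' by
      rw [hmarg]
      simp [Matrix.sum_apply]]
    rw [hrep' a a' b b', Finset.mul_sum, ← Finset.sum_sub_distrib]
    apply Finset.sum_congr rfl
    intro k _
    ring
  rw [hdiff]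
  exact psd_sum _ _ fun k _ =>
    psd_smul_real (kron_psd (one_sub_density_psd (hα k).1 (hα k).2) (hβ k).1) (hp k)

end Main

/-- If `ρ_{AB}` is a separable bipartite state then the conditional von
Neumann entropy `S(A|B) = S(AB) − S(B)` is nonnegative. -/
theorem stmt8 {A B : Type*} [Fintype A] [DecidableEq A] [Fintype B] [DecidableEq B]
    (ρ : Matrix (A × B) (A × B) ℂ) (hρ : IsDensity ρ) (hsep : Separable ρ) :
    0 ≤ vNE ρ - vNE (margSnd ρ) := by
  obtain ⟨hmargPSD, hdiffPSD⟩ := sep_structure ρ hρ hsep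
  obtain ⟨U, r, hU, hρ_repr, hrpos, hvρ⟩ := exists_repr hρ.1
  obtain ⟨V, μ, hV, hm_repr, hμpos, hvm⟩ := exists_repr hmargPSD
  have hU' : U * Uᴴ = 1 := mul_eq_one_comm.mp hU
  have hV' : V * Vᴴ = 1 := mul_eq_one_comm.mp hV
  have hZ : ((1 : Matrix A A ℂ) ⊗ₖ V)ᴴ * ((1 : Matrix A A ℂ) ⊗ₖ V) = 1 := kron_one_unitary V hV
  have hZ' : ((1 : Matrix A A ℂ) ⊗ₖ V) * ((1 : Matrix A A ℂ) ⊗ₖ V)ᴴ = 1 := mul_eq_one_comm.mp hZ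
  have hσ_repr : (1 : Matrix A A ℂ) ⊗ₖ margSnd ρ
      = ((1 : Matrix A A ℂ) ⊗ₖ V) * rdiag (fun x : A × B => μ x.2)
        * (((1 : Matrix A A ℂ) ⊗ₖ V))ᴴ := by
    rw [hm_repr]
    exact kron_one_repr V μ
  -- the per-ε inequality
  have key : ∀ ε : ℝ, 0 < ε →
      ∑ i, (r i + ε) * Real.log (r i + ε)
        ≤ ∑ j, (μ j + (Fintype.card A : ℝ) * ε) * Real.log (μ j + ε) := by
    intro ε hε
    have hdpos : ∀ i : A × B, 0 < r i + ε := fun i => by linarith [hrpos i]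
    have hepos : ∀ x : A × B, 0 < μ x.2 + ε := fun x => by linarith [hμpos x.2]
    have hρε_repr : U * rdiag (fun i => r i + ε) * Uᴴ = ρ + (ε:ℂ) • 1 := by
      rw [conj_rdiag_add_const U hU', ← hρ_repr]
    have hσε_repr : ((1 : Matrix A A ℂ) ⊗ₖ V) * rdiag (fun x : A × B => μ x.2 + ε)
        * (((1 : Matrix A A ℂ) ⊗ₖ V))ᴴ = (1 : Matrix A A ℂ) ⊗ₖ margSnd ρ + (ε:ℂ) • 1 := by
      rw [conj_rdiag_add_const _ hZ', ← hσ_repr]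
    have hXY : (((1 : Matrix A A ℂ) ⊗ₖ V) * rdiag (fun x : A × B => μ x.2 + ε)
        * (((1 : Matrix A A ℂ) ⊗ₖ V))ᴴ
        - U * rdiag (fun i => r i + ε) * Uᴴ).PosSemidef := by
      rw [hρε_repr, hσε_repr, add_sub_add_right_eq_sub]
      exact hdiffPSD
    have hlog := core_log_mono U ((1 : Matrix A A ℂ) ⊗ₖ V) hU hZ
      (fun i => r i + ε) (fun x : A × B => μ x.2 + ε) hdpos hepos hXY
    have hpair := trace_pair_nonneg U (fun i => r i + ε) (fun i => (hdpos i).le) _ hlog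
    have ht1 : ((U * rdiag (fun i => r i + ε) * Uᴴ) *
        (U * rdiag (fun i => Real.log (r i + ε)) * Uᴴ)).trace
        = ((∑ i, (r i + ε) * Real.log (r i + ε) : ℝ) : ℂ) :=
      conj_rdiag_mul_trace U hU _ _
    have ht2 : ((U * rdiag (fun i => r i + ε) * Uᴴ) *
        (((1 : Matrix A A ℂ) ⊗ₖ V) * rdiag (fun x : A × B => Real.log (μ x.2 + ε))
          * (((1 : Matrix A A ℂ) ⊗ₖ V))ᴴ)).trace
        = ((∑ j, (μ j + (Fintype.card A : ℝ) * ε) * Real.log (μ j + ε) : ℝ) : ℂ) := by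
      have hL : ((1 : Matrix A A ℂ) ⊗ₖ V) * rdiag (fun x : A × B => Real.log (μ x.2 + ε))
          * (((1 : Matrix A A ℂ) ⊗ₖ V))ᴴ
          = (1 : Matrix A A ℂ) ⊗ₖ (V * rdiag (fun j => Real.log (μ j + ε)) * Vᴴ) :=
        (kron_one_repr V (fun j => Real.log (μ j + ε))).symm
      rw [hL, hρε_repr, trace_mul_one_kron]
      have hms : margSnd (ρ + (ε:ℂ) • (1 : Matrix (A × B) (A × B) ℂ))
          = V * rdiag (fun j => μ j + (Fintype.card A : ℝ) * ε) * Vᴴ := by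
        rw [margSnd_add, margSnd_smul_one, conj_rdiag_add_const V hV', ← hm_repr]
        congr 2
        push_cast
        ring
      rw [hms, conj_rdiag_mul_trace V hV]
    have hsub : ((U * rdiag (fun i => r i + ε) * Uᴴ) *
        ((((1 : Matrix A A ℂ) ⊗ₖ V) * rdiag (fun x : A × B => Real.log (μ x.2 + ε))
          * (((1 : Matrix A A ℂ) ⊗ₖ V))ᴴ)
          - (U * rdiag (fun i => Real.log (r i + ε)) * Uᴴ))).trace
        = ((∑ j, (μ j + (Fintype.card A : ℝ) * ε) * Real.log (μ j + ε) : ℝ) : ℂ)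
          - ((∑ i, (r i + ε) * Real.log (r i + ε) : ℝ) : ℂ) := by
      rw [Matrix.mul_sub, Matrix.trace_sub, ht1, ht2]
    rw [hsub, ← Complex.ofReal_sub, Complex.zero_le_real] at hpair
    linarith [hpair]
  -- take the limit ε → 0⁺
  have hbase : ∀ x : ℝ, Filter.Tendsto (fun ε : ℝ => x + ε) (nhdsWithin 0 (Set.Ioi 0)) (nhds x) := by
    intro x
    have h1 : Filter.Tendsto (fun ε : ℝ => x + ε) (nhds 0) (nhds (x + 0)) :=
      (continuous_const.add continuous_id).tendsto 0
    rw [add_zero] at h1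
    exact h1.mono_left nhdsWithin_le_nhds
  have hrlim : Filter.Tendsto (fun ε : ℝ => ∑ i, (r i + ε) * Real.log (r i + ε))
      (nhdsWithin 0 (Set.Ioi 0)) (nhds (∑ i, r i * Real.log (r i))) := by
    apply tendsto_finset_sum
    intro i _
    exact (Real.continuous_mul_log.tendsto (r i)).comp (hbase (r i))
  have hslim : Filter.Tendsto
      (fun ε : ℝ => ∑ j, (μ j + (Fintype.card A : ℝ) * ε) * Real.log (μ j + ε))
      (nhdsWithin 0 (Set.Ioi 0)) (nhds (∑ j, μ j * Real.log (μ j))) := by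
    apply tendsto_finset_sum
    intro j _
    have h1 : Filter.Tendsto (fun ε : ℝ => (μ j + ε) * Real.log (μ j + ε))
        (nhdsWithin 0 (Set.Ioi 0)) (nhds (μ j * Real.log (μ j))) :=
      (Real.continuous_mul_log.tendsto (μ j)).comp (hbase (μ j))
    have h2 : Filter.Tendsto (fun ε : ℝ => ε * Real.log (μ j + ε))
        (nhdsWithin 0 (Set.Ioi 0)) (nhds 0) := by
      rcases eq_or_lt_of_le (hμpos j) with h|h
      · have h3 : Filter.Tendsto (fun ε : ℝ => ε * Real.log ε)
            (nhdsWithin 0 (Set.Ioi 0)) (nhds 0) := by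
          have := (Real.continuous_mul_log.tendsto 0).mono_left
            (nhdsWithin_le_nhds (s := Set.Ioi (0:ℝ)))
          simpa using this
        apply h3.congr
        intro ε
        rw [← h, zero_add]
      · have h4 : Filter.Tendsto (fun ε : ℝ => ε) (nhdsWithin 0 (Set.Ioi 0)) (nhds 0) :=
          tendsto_id.mono_left nhdsWithin_le_nhds
        have h5 : Filter.Tendsto (fun ε : ℝ => Real.log (μ j + ε))
            (nhdsWithin 0 (Set.Ioi 0)) (nhds (Real.log (μ j))) :=
          ((Real.continuousAt_log h.ne').tendsto).comp (hbase (μ j))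
        have := h4.mul h5
        simpa using this
    have h6 := h1.add (h2.const_mul ((Fintype.card A : ℝ) - 1))
    rw [show μ j * Real.log (μ j) + ((Fintype.card A : ℝ) - 1) * 0
        = μ j * Real.log (μ j) by ring] at h6
    apply h6.congr
    intro ε
    ring
  have hfinal : ∑ i, r i * Real.log (r i) ≤ ∑ j, μ j * Real.log (μ j) := by
    have hev : ∀ᶠ ε in nhdsWithin (0:ℝ) (Set.Ioi 0),
        (fun ε : ℝ => ∑ i, (r i + ε) * Real.log (r i + ε)) ε
          ≤ (fun ε : ℝ => ∑ j, (μ j + (Fintype.card A : ℝ) * ε) * Real.log (μ j + ε)) ε := by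
      filter_upwards [self_mem_nhdsWithin] with ε hε
      exact key ε hε
    exact le_of_tendsto_of_tendsto hrlim hslim hev
  rw [hvρ, hvm]
  linarith [hfinal]
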